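/- Let P be a CPOS polygon such that each pair of consecutive great diagonals d_i, d_{i+1} meets in a unique point D(i+1/2). Then: (a) all the points D(i+1/2), 1 ≤ i ≤ 2n, coincide (the central symmetry set reduces to a point) if and only if P is symmetric with respect to some point O; (b) all the midpoints M_i := (P_i + P_{i+n})/2, 1 ≤ i ≤ n, coincide (the area evolute reduces to a point) if and only if P is symmetric with respect to some point O. -/

import Mathlib

open scoped BigOperators Classical

/-- `det2 v w` is the determinant of the 2×2 matrix with columns `v, w ∈ ℝ²`. -/
noncomputable def det2 (v w : ℝ × ℝ) : ℝ := v.1 * w.2 - v.2 * w.1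

/-- A convex polygon with parallel opposite sides (CPOS polygon): vertices `P i`, `i : ℤ`,
periodic with period `2n`; the side vectors `e(i+1/2) = P(i+1) - P i` satisfy
`e(i+n+1/2) ∥ e(i+1/2)`, no two adjacent sides are parallel, and the polygon is
positively oriented: `[e(i+1/2), e(j+1/2)] > 0` for `1 ≤ i < j ≤ n`. -/
structure CPOS (n : ℕ) : Type where
  P : ℤ → ℝ × ℝ
  hn : 2 ≤ n
  periodic : ∀ i : ℤ, P (i + 2 * (n : ℤ)) = P i
  parallel : ∀ i : ℤ, ∃ t : ℝ, P (i + (n : ℤ) + 1) - P (i + (n : ℤ)) = t • (P (i + 1) - P i)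
  adj_not_parallel : ∀ i : ℤ, det2 (P (i + 1) - P i) (P (i + 2) - P (i + 1)) ≠ 0
  oriented : ∀ i j : ℤ, 1 ≤ i → i < j → j ≤ (n : ℤ) →
    0 < det2 (P (i + 1) - P i) (P (j + 1) - P j)

/-- `onDiag P n i x` : the point `x` lies on the great diagonal `d_i`,
the line through `P i` and `P (i+n)`. -/
def onDiag (P : ℤ → ℝ × ℝ) (n : ℕ) (i : ℤ) (x : ℝ × ℝ) : Prop :=
  ∃ t : ℝ, x = P i + t • (P (i + (n : ℤ)) - P i)

/- ### Auxiliary lemmas -/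

lemma det2_smul_left (a : ℝ) (v w : ℝ × ℝ) : det2 (a • v) w = a * det2 v w := by
  simp [det2]; ring

lemma det2_smul_right (a : ℝ) (v w : ℝ × ℝ) : det2 v (a • w) = a * det2 v w := by
  simp [det2]; ring

lemma det2_zero_right (v : ℝ × ℝ) : det2 v 0 = 0 := by simp [det2]

lemma det2_self (v : ℝ × ℝ) : det2 v v = 0 := by simp [det2]; ring

lemma det2_swap (v w : ℝ × ℝ) : det2 v w = - det2 w v := by simp [det2]; ring

lemma det2_sum (v : ℝ × ℝ) (s : Finset ℕ) (f : ℕ → ℝ × ℝ) :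
    det2 v (∑ k ∈ s, f k) = ∑ k ∈ s, det2 v (f k) := by
  classical
  induction s using Finset.induction_on with
  | empty => simp [det2]
  | insert a t h ih =>
    rw [Finset.sum_insert h, Finset.sum_insert h, ← ih]
    simp [det2]; ring

lemma indep2 {v w : ℝ × ℝ} (h : det2 v w ≠ 0) {a b : ℝ} (hab : a • v + b • w = 0) :
    a = 0 ∧ b = 0 := by
  have h1 : a * v.1 + b * w.1 = 0 := by
    have := congrArg Prod.fst hab; simpa using this
  have h2 : a * v.2 + b * w.2 = 0 := by
    have := congrArg Prod.snd hab; simpa using this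
  have ha : a * det2 v w = 0 := by
    simp only [det2]
    linear_combination w.2 * h1 - w.1 * h2
  have hb : b * det2 v w = 0 := by
    simp only [det2]
    linear_combination (-v.2) * h1 + v.1 * h2
  exact ⟨by rcases mul_eq_zero.mp ha with h' | h'; exacts [h', absurd h' h],
         by rcases mul_eq_zero.mp hb with h' | h'; exacts [h', absurd h' h]⟩

lemma collin {v w : ℝ × ℝ} (h : det2 v w = 0) (hw : w ≠ 0) : ∃ k : ℝ, v = k • w := by
  have hw' : w.1 ≠ 0 ∨ w.2 ≠ 0 := by
    by_contra hc
    push_neg at hc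
    exact hw (Prod.ext hc.1 hc.2)
  simp only [det2] at h
  rcases hw' with h1 | h2
  · refine ⟨v.1 / w.1, ?_⟩
    have : v.2 = v.1 / w.1 * w.2 := by field_simp; linear_combination -h
    exact Prod.ext (by rw [Prod.smul_fst, smul_eq_mul, div_mul_cancel₀ _ h1]) (by simpa using this)
  · refine ⟨v.2 / w.2, ?_⟩
    have : v.1 = v.2 / w.2 * w.1 := by field_simp; linear_combination h
    exact Prod.ext (by simpa using this) (by rw [Prod.smul_snd, smul_eq_mul, div_mul_cancel₀ _ h2])

lemma tele (P : ℤ → ℝ × ℝ) (a : ℤ) (m : ℕ) :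
    (∑ k ∈ Finset.range m, (P (a + (k:ℤ) + 1) - P (a + (k:ℤ)))) = P (a + (m:ℤ)) - P a := by
  induction m with
  | zero => simp
  | succ j ih =>
    rw [Finset.sum_range_succ, ih]
    push_cast
    rw [show a + ((j:ℤ) + 1) = a + (j:ℤ) + 1 by ring]
    abel

lemma hard {n : ℕ} (P : ℤ → ℝ × ℝ) (hn : 2 ≤ n)
    (periodic : ∀ i : ℤ, P (i + 2 * (n : ℤ)) = P i)
    (parallel : ∀ i : ℤ, ∃ t : ℝ, P (i + (n : ℤ) + 1) - P (i + (n : ℤ)) = t • (P (i + 1) - P i))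
    (adj : ∀ i : ℤ, det2 (P (i + 1) - P i) (P (i + 2) - P (i + 1)) ≠ 0)
    (oriented : ∀ i j : ℤ, 1 ≤ i → i < j → j ≤ (n : ℤ) →
      0 < det2 (P (i + 1) - P i) (P (j + 1) - P j))
    (X : ℝ × ℝ)
    (hX : ∀ i : ℤ, ∃ t : ℝ, X = P i + t • (P (i + (n:ℤ)) - P i))
    (huniq2 : ∀ i : ℤ, ∀ y : ℝ × ℝ, (∃ t : ℝ, y = P i + t • (P (i + (n:ℤ)) - P i)) →
      (∃ t : ℝ, y = P (i + 1) + t • (P (i + 1 + (n:ℤ)) - P (i + 1))) → y = X) :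
    ∀ i : ℤ, P (i + (n:ℤ)) - X = X - P i := by
  have hnpos : (0:ℤ) < (n:ℤ) := by exact_mod_cast Nat.lt_of_lt_of_le Nat.zero_lt_two hn
  have hE0 : ∀ i : ℤ, P (i + 1) - P i ≠ 0 := by
    intro i h
    apply adj i
    rw [h]
    simp [det2]
  choose t ht using hX
  choose s hs using parallel
  have hEper : ∀ i : ℤ, P (i + 2*(n:ℤ) + 1) - P (i + 2*(n:ℤ)) = P (i+1) - P i := by
    intro i
    rw [show i + 2*(n:ℤ) + 1 = (i+1) + 2*(n:ℤ) by ring, periodic, periodic]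
  have hs' : ∀ i : ℤ, s (i + (n:ℤ)) * s i = 1 := by
    intro i
    have h2 := hs (i + (n:ℤ))
    rw [show i + (n:ℤ) + (n:ℤ) + 1 = i + 2*(n:ℤ) + 1 by ring,
        show i + (n:ℤ) + (n:ℤ) = i + 2*(n:ℤ) by ring] at h2
    rw [hEper i, hs i, smul_smul] at h2
    have h3 : (s (i + (n:ℤ)) * s i - 1) • (P (i+1) - P i) = 0 := by
      rw [sub_smul, one_smul, ← h2, sub_self]
    rcases smul_eq_zero.mp h3 with h | h
    · linarith
    · exact absurd h (hE0 i)
  have ht0 : ∀ i : ℤ, P i ≠ X → t i ≠ 0 := by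
    intro i hne h0
    have h1 := ht i
    rw [h0, zero_smul, add_zero] at h1
    exact hne h1.symm
  have hS0 : ∀ i : ℤ, P i ≠ X → P (i + (n:ℤ)) - P i ≠ 0 := by
    intro i hne h0
    have h1 := ht i
    rw [h0, smul_zero, add_zero] at h1
    exact hne h1.symm
  obtain ⟨lam, hlam⟩ : ∃ lam : ℤ → ℝ, ∀ i : ℤ, P i ≠ X →
      P (i + (n:ℤ)) - X = lam i • (P i - X) := by
    refine ⟨fun i => (t i - 1) / t i, ?_⟩
    intro i hne
    have h0 := ht0 i hne
    have hq : P i - X = (-(t i)) • (P (i + (n:ℤ)) - P i) := by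
      rw [ht i, neg_smul]; abel
    have hqn : P (i + (n:ℤ)) - X = (1 - t i) • (P (i + (n:ℤ)) - P i) := by
      rw [ht i, sub_smul, one_smul]; abel
    rw [hq, hqn, smul_smul]
    congr 1
    field_simp
    ring
  have hdetSS : ∀ i : ℤ, P i ≠ X → P (i+1) ≠ X →
      det2 (P (i + (n:ℤ)) - P i) (P (i + 1 + (n:ℤ)) - P (i+1)) ≠ 0 := by
    intro i h1 h2 h0
    have hS2 : P (i + 1 + (n:ℤ)) - P (i+1) ≠ 0 := hS0 (i+1) h2
    obtain ⟨k, hk⟩ := collin h0 hS2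
    have hk0 : k ≠ 0 := by
      intro h
      rw [h, zero_smul] at hk
      exact hS0 i h1 hk
    have hY1 : ∃ u : ℝ, X + (P (i + 1 + (n:ℤ)) - P (i+1)) = P i + u • (P (i + (n:ℤ)) - P i) := by
      refine ⟨t i + k⁻¹, ?_⟩
      have hiv : P (i + 1 + (n:ℤ)) - P (i+1) = k⁻¹ • (P (i + (n:ℤ)) - P i) := by
        rw [hk, smul_smul, inv_mul_cancel₀ hk0, one_smul]
      rw [hiv, ht i, add_smul]
      abel
    have hY2 : ∃ u : ℝ, X + (P (i + 1 + (n:ℤ)) - P (i+1))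
        = P (i+1) + u • (P (i + 1 + (n:ℤ)) - P (i+1)) := by
      refine ⟨t (i+1) + 1, ?_⟩
      rw [ht (i+1), add_smul, one_smul]
      abel
    have hYX := huniq2 i _ hY1 hY2
    rw [add_eq_left] at hYX
    exact hS2 hYX
  have hdetQQ : ∀ i : ℤ, P i ≠ X → P (i+1) ≠ X → det2 (P i - X) (P (i+1) - X) ≠ 0 := by
    intro i h1 h2
    have hq1 : P i - X = (-(t i)) • (P (i + (n:ℤ)) - P i) := by
      rw [ht i, neg_smul]; abel
    have hq2 : P (i+1) - X = (-(t (i+1))) • (P (i + 1 + (n:ℤ)) - P (i+1)) := by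
      rw [ht (i+1), neg_smul]; abel
    rw [hq1, hq2, det2_smul_left, det2_smul_right]
    exact mul_ne_zero (neg_ne_zero.mpr (ht0 i h1))
      (mul_ne_zero (neg_ne_zero.mpr (ht0 (i+1) h2)) (hdetSS i h1 h2))
  have hchain : ∀ i : ℤ, P i ≠ X → P (i+1) ≠ X → lam i = s i ∧ lam (i+1) = s i := by
    intro i h1 h2
    have e1 := hs i
    have l1 := hlam i h1
    have l2 := hlam (i+1) h2
    rw [show i + 1 + (n:ℤ) = i + (n:ℤ) + 1 by ring] at l2
    have e3 : (s i - lam i) • (P i - X) + (lam (i+1) - s i) • (P (i+1) - X) = 0 := by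
      linear_combination (norm := module) l1 + e1 - l2
    obtain ⟨hc1, hc2⟩ := indep2 (hdetQQ i h1 h2) e3
    constructor
    · linarith
    · linarith
  have hpinch : ∀ i : ℤ, P i = X →
      P (i + (n:ℤ)) = X ∧ lam (i+1) = s i ∧ lam (i-1) = s (i-1) := by
    intro i hiX
    have h1 : P (i+1) ≠ X := by
      intro h
      apply hE0 i
      rw [h, hiX, sub_self]
    have h2 : P (i-1) ≠ X := by
      intro h
      apply hE0 (i-1)
      rw [show i - 1 + 1 = i by ring, hiX, h, sub_self]
    have hAB : det2 (P (i+1) - X) (P (i-1) - X) ≠ 0 := by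
      have hadj := adj (i-1)
      rw [show i - 1 + 1 = i by ring, show i - 1 + 2 = i + 1 by ring] at hadj
      intro h
      apply hadj
      rw [← hiX] at h
      have hh : det2 (P i - P (i-1)) (P (i+1) - P i)
          = det2 (P (i+1) - P i) (P (i-1) - P i) := by
        simp [det2]; ring
      rw [hh]; exact h
    have l1 := hlam (i+1) h1
    rw [show i + 1 + (n:ℤ) = i + (n:ℤ) + 1 by ring] at l1
    have l2 := hlam (i-1) h2
    rw [show i - 1 + (n:ℤ) = i + (n:ℤ) - 1 by ring] at l2
    have e1 := hs i
    have e2 := hs (i-1)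
    rw [show i - 1 + (n:ℤ) + 1 = i + (n:ℤ) by ring, show i - 1 + 1 = i by ring,
        show i - 1 + (n:ℤ) = i + (n:ℤ) - 1 by ring] at e2
    have r1 : P (i + (n:ℤ)) - X = (lam (i+1) - s i) • (P (i+1) - X) := by
      linear_combination (norm := module) l1 - e1 + (s i) • hiX
    have r2 : P (i + (n:ℤ)) - X = (lam (i-1) - s (i-1)) • (P (i-1) - X) := by
      linear_combination (norm := module) l2 + e2 + (s (i-1)) • hiX
    have e3 : (lam (i+1) - s i) • (P (i+1) - X)
        + (-(lam (i-1) - s (i-1))) • (P (i-1) - X) = 0 := by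
      rw [← r1, neg_smul, ← r2]
      abel
    obtain ⟨hc1, hc2⟩ := indep2 hAB e3
    refine ⟨?_, by linarith, by linarith⟩
    rw [← sub_eq_zero, r1, hc1, zero_smul]
  by_cases hZ : ∃ i : ℤ, P i = X
  · exfalso
    obtain ⟨i₀, hi₀⟩ := hZ
    have hfwd : ∀ i : ℤ, P i = X → P (i + (n:ℤ)) = X := fun i h => (hpinch i h).1
    have hbwd : ∀ i : ℤ, P i = X → P (i - (n:ℤ)) = X := by
      intro i h
      have h2 := hfwd i h
      have h3 := periodic (i - (n:ℤ))
      rw [show i - (n:ℤ) + 2*(n:ℤ) = i + (n:ℤ) by ring] at h3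
      rw [h3] at h2
      exact h2
    have hmulz : ∀ m : ℤ, P (i₀ + m * (n:ℤ)) = X := by
      intro m
      induction m using Int.induction_on with
      | zero => simpa using hi₀
      | succ k ih =>
        have h4 := hfwd _ ih
        rw [show i₀ + (k:ℤ)*(n:ℤ) + (n:ℤ) = i₀ + ((k:ℤ)+1)*(n:ℤ) by ring] at h4
        exact h4
      | pred k ih =>
        have h4 := hbwd _ ih
        rw [show i₀ + (-(k:ℤ))*(n:ℤ) - (n:ℤ) = i₀ + (-(k:ℤ) - 1)*(n:ℤ) by ring] at h4
        exact h4
    obtain ⟨z, hz1, hzn, hzX⟩ : ∃ z : ℤ, 1 ≤ z ∧ z ≤ (n:ℤ) ∧ P z = X := by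
      set q := (i₀ - 1) / (n:ℤ) with hq
      have hmod : (i₀ - 1) % (n:ℤ) = i₀ - 1 - (n:ℤ) * q := by
        rw [hq, Int.emod_def]
      have hm1 := Int.emod_nonneg (i₀ - 1) (ne_of_gt hnpos)
      have hm2 := Int.emod_lt_of_pos (i₀ - 1) hnpos
      refine ⟨(i₀ - 1) % (n:ℤ) + 1, by omega, by omega, ?_⟩
      have heq : (i₀ - 1) % (n:ℤ) + 1 = i₀ + (-q) * (n:ℤ) := by rw [hmod]; ring
      rw [heq]
      exact hmulz (-q)
    have hmex : ∃ m : ℕ, 0 < m ∧ P (z + (m:ℤ)) = X := by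
      refine ⟨n, by omega, ?_⟩
      exact hfwd z hzX
    obtain ⟨hm₀pos, hm₀X⟩ := Nat.find_spec hmex
    set m₀ := Nat.find hmex with hm₀def
    have hm₀n : m₀ ≤ n := Nat.find_min' hmex ⟨by omega, hfwd z hzX⟩
    have hmid : ∀ k : ℕ, 0 < k → k < m₀ → P (z + (k:ℤ)) ≠ X := by
      intro k hk1 hk2 hkX
      exact Nat.find_min hmex hk2 ⟨hk1, hkX⟩
    have hm₀2 : 2 ≤ m₀ := by
      by_contra h
      have h1 : m₀ = 1 := by omega
      rw [h1] at hm₀X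
      apply hE0 z
      have : P (z + 1) = X := by exact_mod_cast hm₀X
      rw [this, hzX, sub_self]
    set c := s z with hcdef
    have hlam1 : lam (z + 1) = c := (hpinch z hzX).2.1
    have hlamrun : ∀ k : ℕ, 1 ≤ k → (k:ℤ) ≤ (m₀:ℤ) - 1 → lam (z + (k:ℤ)) = c := by
      intro k
      induction k with
      | zero => omega
      | succ j ih =>
        intro _ hk2
        rcases Nat.eq_zero_or_pos j with rfl | hj1
        · simpa using hlam1
        · have hih := ih (by omega) (by push_cast at hk2 ⊢; omega)
          have hne1 : P (z + (j:ℤ)) ≠ X := hmid j hj1 (by push_cast at hk2; omega)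
          have hne2 : P (z + (j:ℤ) + 1) ≠ X := by
            have := hmid (j+1) (by omega) (by push_cast at hk2; omega)
            push_cast at this
            rw [show z + ((j:ℤ) + 1) = z + (j:ℤ) + 1 by ring] at this
            exact this
          obtain ⟨ha, hb⟩ := hchain (z + (j:ℤ)) hne1 hne2
          push_cast
          rw [show z + ((j:ℤ) + 1) = z + (j:ℤ) + 1 by ring]
          rw [hb, ← ha, hih]
    have hsrun : ∀ k : ℕ, (k:ℤ) ≤ (m₀:ℤ) - 1 → s (z + (k:ℤ)) = c := by
      intro k hk
      rcases Nat.eq_zero_or_pos k with rfl | hk1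
      · norm_num [hcdef]
      · by_cases hk2 : (k:ℤ) ≤ (m₀:ℤ) - 2
        · have hne1 : P (z + (k:ℤ)) ≠ X := hmid k hk1 (by omega)
          have hne2 : P (z + (k:ℤ) + 1) ≠ X := by
            have := hmid (k+1) (by omega) (by omega)
            push_cast at this
            rw [show z + ((k:ℤ) + 1) = z + (k:ℤ) + 1 by ring] at this
            exact this
          obtain ⟨ha, _⟩ := hchain (z + (k:ℤ)) hne1 hne2
          rw [← ha]
          exact hlamrun k hk1 hk
        · have hkeq : (k:ℤ) = (m₀:ℤ) - 1 := by omega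
          have hp := (hpinch (z + (m₀:ℤ)) hm₀X).2.2
          rw [show z + (m₀:ℤ) - 1 = z + ((m₀:ℤ) - 1) by ring] at hp
          rw [hkeq, ← hp]
          have := hlamrun (m₀ - 1) (by omega) (by omega)
          rw [show ((m₀ - 1 : ℕ):ℤ) = (m₀:ℤ) - 1 by omega] at this
          exact this
    have hc0 : c ≠ 0 := by
      intro h0
      have h1 : P (z + 1) ≠ X := by
        have := hmid 1 Nat.one_pos (by omega)
        simpa using this
      have l1 := hlam (z+1) h1
      rw [hlam1, h0, zero_smul] at l1
      have h2 : P (z + 1 + (n:ℤ)) = X := by rwa [sub_eq_zero] at l1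
      have h3 := hbwd _ h2
      rw [show z + 1 + (n:ℤ) - (n:ℤ) = z + 1 by ring] at h3
      exact h1 h3
    have hsum : ∑ k ∈ Finset.range m₀, (P (z + (k:ℤ) + 1) - P (z + (k:ℤ))) = 0 := by
      rw [tele P z m₀, hm₀X, hzX, sub_self]
    by_cases hcase : (m₀:ℤ) ≤ (n:ℤ) - z + 1
    · -- all sides in the window
      have hdetsum : ∑ k ∈ Finset.range m₀,
          det2 (P (z+1) - P z) (P (z + (k:ℤ) + 1) - P (z + (k:ℤ))) = 0 := by
        rw [← det2_sum, hsum, det2_zero_right]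
      have hpos : 0 < ∑ k ∈ Finset.range m₀,
          det2 (P (z+1) - P z) (P (z + (k:ℤ) + 1) - P (z + (k:ℤ))) := by
        apply Finset.sum_pos'
        · intro k hk
          rcases Nat.eq_zero_or_pos k with rfl | hk1
          · push_cast
            rw [add_zero]
            rw [det2_self]
          · have hkm : k < m₀ := Finset.mem_range.mp hk
            exact le_of_lt (oriented z (z + (k:ℤ)) hz1 (by omega) (by omega))
        · refine ⟨1, Finset.mem_range.mpr (by omega), ?_⟩
          have := oriented z (z + (1:ℤ)) hz1 (by omega) (by omega)
          push_cast
          exact this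
      rw [hdetsum] at hpos
      exact lt_irrefl 0 hpos
    · -- two groups
      push_neg at hcase
      set Kn : ℕ := ((n:ℤ) - z + 1).toNat with hKndef
      have hKnz : (Kn:ℤ) = (n:ℤ) - z + 1 := Int.toNat_of_nonneg (by omega)
      have hKn1 : 1 ≤ Kn := by omega
      have hKnm : Kn < m₀ := by omega
      have hother : ∀ k : ℕ, Kn ≤ k → k < m₀ →
          (P (z + (k:ℤ) + 1) - P (z + (k:ℤ)))
            = c⁻¹ • (P (z + (k:ℤ) - (n:ℤ) + 1) - P (z + (k:ℤ) - (n:ℤ))) := by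
        intro k h1 h2
        have e1 := hs (z + (k:ℤ) - (n:ℤ))
        rw [show z + (k:ℤ) - (n:ℤ) + (n:ℤ) + 1 = z + (k:ℤ) + 1 by ring,
            show z + (k:ℤ) - (n:ℤ) + (n:ℤ) = z + (k:ℤ) by ring] at e1
        have e2 := hs' (z + (k:ℤ) - (n:ℤ))
        rw [show z + (k:ℤ) - (n:ℤ) + (n:ℤ) = z + (k:ℤ) by ring] at e2
        have e3 : s (z + (k:ℤ)) = c := hsrun k (by omega)
        rw [e3] at e2
        have e4 : s (z + (k:ℤ) - (n:ℤ)) = c⁻¹ := by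
          field_simp
          linear_combination e2
        rw [e1, e4]
      have key : ∀ v : ℝ × ℝ,
          c * (∑ k ∈ Finset.range Kn, det2 v (P (z + (k:ℤ) + 1) - P (z + (k:ℤ))))
          + (∑ k ∈ Finset.Ico Kn m₀,
              det2 v (P (z + (k:ℤ) - (n:ℤ) + 1) - P (z + (k:ℤ) - (n:ℤ)))) = 0 := by
        intro v
        have h0 : (∑ k ∈ Finset.range m₀, det2 v (P (z + (k:ℤ) + 1) - P (z + (k:ℤ)))) = 0 := by
          rw [← det2_sum, hsum, det2_zero_right]
        have hsplit : (∑ k ∈ Finset.range m₀, det2 v (P (z + (k:ℤ) + 1) - P (z + (k:ℤ))))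
            = (∑ k ∈ Finset.range Kn, det2 v (P (z + (k:ℤ) + 1) - P (z + (k:ℤ))))
            + (∑ k ∈ Finset.Ico Kn m₀, det2 v (P (z + (k:ℤ) + 1) - P (z + (k:ℤ)))) := by
          simp only [Finset.range_eq_Ico]
          rw [← Finset.sum_Ico_consecutive _ (Nat.zero_le Kn) (le_of_lt hKnm)]
        have hIco : (∑ k ∈ Finset.Ico Kn m₀, det2 v (P (z + (k:ℤ) + 1) - P (z + (k:ℤ))))
            = c⁻¹ * (∑ k ∈ Finset.Ico Kn m₀,
                det2 v (P (z + (k:ℤ) - (n:ℤ) + 1) - P (z + (k:ℤ) - (n:ℤ)))) := by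
          rw [Finset.mul_sum]
          apply Finset.sum_congr rfl
          intro k hk
          obtain ⟨hh1, hh2⟩ := Finset.mem_Ico.mp hk
          rw [hother k hh1 hh2, det2_smul_right]
        rw [hsplit, hIco] at h0
        field_simp at h0
        linear_combination h0
      set b : ℤ := (m₀:ℤ) + z - (n:ℤ) - 1 with hbdef
      have hb1 : 1 ≤ b := by omega
      have hbz : b ≤ z - 1 := by omega
      have hW : ∀ w : ℤ, 1 ≤ w → w < z →
          0 < ∑ k ∈ Finset.range Kn, det2 (P (w+1) - P w) (P (z + (k:ℤ) + 1) - P (z + (k:ℤ))) := by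
        intro w hw1 hw2
        apply Finset.sum_pos
        · intro k hk
          have hkK : k < Kn := Finset.mem_range.mp hk
          exact oriented w (z + (k:ℤ)) hw1 (by omega) (by omega)
        · exact ⟨0, Finset.mem_range.mpr (by omega)⟩
      have hrep : ∀ k : ℕ, k ∈ Finset.Ico Kn m₀ →
          1 ≤ z + (k:ℤ) - (n:ℤ) ∧ z + (k:ℤ) - (n:ℤ) ≤ b := by
        intro k hk
        obtain ⟨hh1, hh2⟩ := Finset.mem_Ico.mp hk
        omega
      have hQ1 : 0 ≤ ∑ k ∈ Finset.Ico Kn m₀,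
          det2 (P ((1:ℤ)+1) - P 1) (P (z + (k:ℤ) - (n:ℤ) + 1) - P (z + (k:ℤ) - (n:ℤ))) := by
        apply Finset.sum_nonneg
        intro k hk
        obtain ⟨hr1, hr2⟩ := hrep k hk
        rcases eq_or_lt_of_le hr1 with heq | hlt
        · rw [← heq, det2_self]
        · exact le_of_lt (oriented 1 (z + (k:ℤ) - (n:ℤ)) le_rfl hlt (by omega))
      have k1 := key (P ((1:ℤ)+1) - P 1)
      have hw1 := hW 1 le_rfl (by omega)
      have hcneg : c < 0 := by
        rcases lt_trichotomy c 0 with h|h|h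
        · exact h
        · exact absurd h hc0
        · nlinarith
      have kb := key (P (b+1) - P b)
      have hWb := hW b hb1 (by omega)
      have hQb : ∑ k ∈ Finset.Ico Kn m₀,
          det2 (P (b+1) - P b) (P (z + (k:ℤ) - (n:ℤ) + 1) - P (z + (k:ℤ) - (n:ℤ))) ≤ 0 := by
        apply Finset.sum_nonpos
        intro k hk
        obtain ⟨hr1, hr2⟩ := hrep k hk
        rcases eq_or_lt_of_le hr2 with heq | hlt
        · rw [heq, det2_self]
        · have hor := oriented (z + (k:ℤ) - (n:ℤ)) b hr1 hlt (by omega)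
          rw [det2_swap]
          linarith
      nlinarith [mul_neg_of_neg_of_pos hcneg hWb]
  · push_neg at hZ
    have hstep : ∀ i : ℤ, lam (i+1) = lam i := by
      intro i
      obtain ⟨a, b⟩ := hchain i (hZ i) (hZ (i+1))
      exact b.trans a.symm
    have hconst : ∀ i : ℤ, lam i = lam 0 := by
      intro i
      induction i using Int.induction_on with
      | zero => rfl
      | succ k ih => rw [hstep (k:ℤ), ih]
      | pred k ih =>
        have h4 := hstep (-(k:ℤ) - 1)
        rw [show -(k:ℤ) - 1 + 1 = -(k:ℤ) by ring] at h4
        rw [← h4, ih]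
    have hQc : ∀ i : ℤ, P (i + (n:ℤ)) - X = lam 0 • (P i - X) := by
      intro i
      rw [hlam i (hZ i), hconst i]
    have hc2 : lam 0 * lam 0 = 1 := by
      have h1 := hQc 0
      have h2 := hQc ((0:ℤ) + (n:ℤ))
      rw [h1, smul_smul] at h2
      have h3 : P ((0:ℤ) + (n:ℤ) + (n:ℤ)) = P 0 := by
        have h5 := periodic 0
        rw [show (0:ℤ) + 2*(n:ℤ) = 0 + (n:ℤ) + (n:ℤ) by ring] at h5
        exact h5
      rw [h3] at h2
      have h4 : (lam 0 * lam 0 - 1) • (P 0 - X) = 0 := by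
        rw [sub_smul, one_smul, ← h2, sub_self]
      rcases smul_eq_zero.mp h4 with h | h
      · linarith
      · exact absurd (sub_eq_zero.mp h) (hZ 0)
    have hcne : lam 0 ≠ 1 := by
      intro h
      have h1 := hQc 0
      rw [h, one_smul] at h1
      apply hS0 0 (hZ 0)
      have h6 : P ((0:ℤ) + (n:ℤ)) = P 0 := by
        have := sub_left_inj.mp h1
        exact this
      rw [h6, sub_self]
    have hcm : lam 0 = -1 := by
      rcases mul_self_eq_one_iff.mp hc2 with h | h
      · exact absurd h hcne
      · exact h
    intro i
    rw [hQc i, hcm, neg_one_smul, neg_sub]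

/-- For a CPOS polygon whose consecutive great diagonals `d_i, d_{i+1}`
meet in a unique point `D(i+1/2)`:
(a) all the points `D(i+1/2)` coincide iff the polygon is symmetric w.r.t. some point `O`;
(b) all the midpoints `M_i = (P_i + P_{i+n})/2` coincide iff the polygon is symmetric. -/
theorem statement0 {n : ℕ} (C : CPOS n) (D : ℤ → ℝ × ℝ)
    (hD : ∀ i : ℤ, onDiag C.P n i (D i) ∧ onDiag C.P n (i + 1) (D i))
    (huniq : ∀ i : ℤ, ∀ x : ℝ × ℝ, onDiag C.P n i x ∧ onDiag C.P n (i + 1) x → x = D i) :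
    ((∀ i j : ℤ, D i = D j) ↔
      ∃ O : ℝ × ℝ, ∀ i : ℤ, C.P (i + (n : ℤ)) - O = O - C.P i) ∧
    ((∀ i j : ℤ, (1 / 2 : ℝ) • (C.P i + C.P (i + (n : ℤ)))
        = (1 / 2 : ℝ) • (C.P j + C.P (j + (n : ℤ)))) ↔
      ∃ O : ℝ × ℝ, ∀ i : ℤ, C.P (i + (n : ℤ)) - O = O - C.P i) := by
  have hOdiag : ∀ O : ℝ × ℝ, (∀ i : ℤ, C.P (i + (n : ℤ)) - O = O - C.P i) →
      ∀ i : ℤ, D i = O := by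
    intro O hO i
    have h1 : onDiag C.P n i O := by
      exact ⟨1/2, by linear_combination (norm := module) (-(1/2 : ℝ)) • hO i⟩
    have h2 : onDiag C.P n (i+1) O := by
      exact ⟨1/2, by linear_combination (norm := module) (-(1/2 : ℝ)) • hO (i+1)⟩
    exact (huniq i O ⟨h1, h2⟩).symm
  constructor
  · constructor
    · intro hall
      refine ⟨D 0, ?_⟩
      have hX : ∀ i : ℤ, ∃ t : ℝ, D 0 = C.P i + t • (C.P (i + (n:ℤ)) - C.P i) := by
        intro i
        obtain ⟨t, htt⟩ := (hD i).1
        exact ⟨t, by rw [← hall i 0]; exact htt⟩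
      have huniq2 : ∀ i : ℤ, ∀ y : ℝ × ℝ, (∃ t : ℝ, y = C.P i + t • (C.P (i + (n:ℤ)) - C.P i)) →
          (∃ t : ℝ, y = C.P (i + 1) + t • (C.P (i + 1 + (n:ℤ)) - C.P (i + 1))) → y = D 0 := by
        intro i y h1 h2
        rw [← hall i 0]
        exact huniq i y ⟨h1, h2⟩
      exact hard C.P C.hn C.periodic C.parallel C.adj_not_parallel C.oriented (D 0) hX huniq2
    · rintro ⟨O, hO⟩ i j
      rw [hOdiag O hO i, hOdiag O hO j]
  · constructor
    · intro hmid
      refine ⟨(1/2 : ℝ) • (C.P 0 + C.P ((0:ℤ) + (n:ℤ))), ?_⟩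
      intro i
      linear_combination (norm := module) (2:ℝ) • hmid i 0
    · rintro ⟨O, hO⟩ i j
      linear_combination (norm := module) ((1/2:ℝ)) • hO i - ((1/2:ℝ)) • hO j
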